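/- For every integer n ≥ 2, the (n+1)-dimensional n-ary Filippov algebra D₃ degenerates to C₁; that is, the structure of C₁ lies in the closure of the GL(V)-orbit of the structure of D₃. -/

import Mathlib

open Function Submodule

/-! Common framework: `V = ℂ^{n+1}`, `n`-ary multiplications as functions
`(Fin n → V) → V`, the action of `GL(V)` on them, orbits, and the
(n+1)-dimensional n-ary Filippov algebras of Kaygorodov–Volkov, each described
as an alternating `n`-linear map by its values on the increasing tuples of
distinct standard basis vectors (0-indexed: `bt n j` is the tuple omitting `e j`). -/

/-- The underlying space `V = ℂ^{n+1}`. -/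
abbrev nV (n : ℕ) : Type := Fin (n + 1) → ℂ

/-- The `j`-th standard basis vector of `V` (0-indexed). -/
def sb (n : ℕ) (j : Fin (n + 1)) : nV n := Pi.single j 1

/-- The increasing `n`-tuple of standard basis vectors omitting `e j`. -/
def bt (n : ℕ) (j : Fin (n + 1)) : Fin n → nV n := fun k => sb n (j.succAbove k)

/-- The action of `GL(V)` (invertible linear maps) on `n`-ary multiplications:
`(g • μ)(x₁, …, xₙ) = g (μ (g⁻¹ x₁, …, g⁻¹ xₙ))`. -/
noncomputable def glAct (n : ℕ) (g : nV n ≃ₗ[ℂ] nV n) (μ : (Fin n → nV n) → nV n) :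
    (Fin n → nV n) → nV n :=
  fun x => g (μ fun i => g.symm (x i))

/-- The `GL(V)`-orbit of an `n`-ary multiplication. -/
def glOrbit (n : ℕ) (μ : (Fin n → nV n) → nV n) : Set ((Fin n → nV n) → nV n) :=
  {ν | ∃ g : nV n ≃ₗ[ℂ] nV n, ν = glAct n g μ}

/-- The algebra `B`: `[e₂, …, e_{n+1}] = e₁` (0-indexed: the tuple omitting `e 0`
maps to `e 0`), all other increasing basis products zero. -/
def IsB (n : ℕ) (μ : AlternatingMap ℂ (nV n) (nV n) (Fin n)) : Prop :=
  μ (bt n 0) = sb n 0 ∧ ∀ j : Fin (n + 1), j ≠ 0 → μ (bt n j) = 0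

/-- The algebra `C₁`: `[e₂, …, e_{n+1}] = e₁`, `[e₁, e₃, …, e_{n+1}] = e₂`. -/
def IsC1 (n : ℕ) (μ : AlternatingMap ℂ (nV n) (nV n) (Fin n)) : Prop :=
  μ (bt n 0) = sb n 0 ∧ μ (bt n 1) = sb n 1 ∧
    ∀ j : Fin (n + 1), j ≠ 0 → j ≠ 1 → μ (bt n j) = 0

/-- The algebra `C₂(α)`: `[e₂, …, e_{n+1}] = α e₁ + e₂`, `[e₁, e₃, …, e_{n+1}] = e₂`. -/
def IsC2 (n : ℕ) (α : ℂ) (μ : AlternatingMap ℂ (nV n) (nV n) (Fin n)) : Prop :=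
  μ (bt n 0) = α • sb n 0 + sb n 1 ∧ μ (bt n 1) = sb n 1 ∧
    ∀ j : Fin (n + 1), j ≠ 0 → j ≠ 1 → μ (bt n j) = 0

/-- The algebra `C₃`: `[e₁, e₃, …, e_{n+1}] = e₁`, `[e₂, e₃, …, e_{n+1}] = e₂`. -/
def IsC3 (n : ℕ) (μ : AlternatingMap ℂ (nV n) (nV n) (Fin n)) : Prop :=
  μ (bt n 1) = sb n 0 ∧ μ (bt n 0) = sb n 1 ∧
    ∀ j : Fin (n + 1), j ≠ 0 → j ≠ 1 → μ (bt n j) = 0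

/-- The algebra `D_r`: `[e₁, …, e_{i-1}, e_{i+1}, …, e_{n+1}] = e_i` for `1 ≤ i ≤ r`
(0-indexed: the tuple omitting `e j` maps to `e j` for `j < r` and to `0` otherwise). -/
def IsD (n r : ℕ) (μ : AlternatingMap ℂ (nV n) (nV n) (Fin n)) : Prop :=
  ∀ j : Fin (n + 1), ((j : ℕ) < r → μ (bt n j) = sb n j) ∧ (r ≤ (j : ℕ) → μ (bt n j) = 0)


/-! ### Auxiliary lemmas -/

/-- Two alternating maps on `V` agree if they agree on all the tuples `bt n j`. -/
lemma alt_ext_bt {n : ℕ} {f g : AlternatingMap ℂ (nV n) (nV n) (Fin n)}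
    (h : ∀ j, f (bt n j) = g (bt n j)) : f = g := by
  classical
  apply Module.Basis.ext_alternating (Pi.basisFun ℂ (Fin (n + 1)))
  intro v hv
  obtain ⟨j, hj⟩ : ∃ j : Fin (n + 1), j ∉ Finset.univ.image v := by
    by_contra hc
    push_neg at hc
    have hsub : (Finset.univ : Finset (Fin (n + 1))) ⊆ Finset.univ.image v :=
      fun x _ => hc x
    have hcard := Finset.card_le_card hsub
    rw [Finset.card_univ, Fintype.card_fin] at hcard
    have : (Finset.univ.image v).card ≤ n := by
      rw [Finset.card_image_of_injective _ hv, Finset.card_univ, Fintype.card_fin]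
    omega
  have hre : Set.range v = Set.range (Fin.succAbove j) := by
    have hA : Finset.univ.image v = Finset.univ.erase j := by
      apply Finset.eq_of_subset_of_card_le
      · intro x hx
        rcases Finset.mem_image.mp hx with ⟨i, _, rfl⟩
        exact Finset.mem_erase.mpr ⟨fun hxj => hj (hxj ▸ hx), Finset.mem_univ _⟩
      · rw [Finset.card_erase_of_mem (Finset.mem_univ j), Finset.card_univ, Fintype.card_fin,
          Finset.card_image_of_injective _ hv, Finset.card_univ, Fintype.card_fin]
        omega
    have hB : Finset.univ.image (Fin.succAbove j) = Finset.univ.erase j := by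
      apply Finset.eq_of_subset_of_card_le
      · intro x hx
        rcases Finset.mem_image.mp hx with ⟨i, _, rfl⟩
        exact Finset.mem_erase.mpr ⟨Fin.succAbove_ne j i, Finset.mem_univ _⟩
      · rw [Finset.card_erase_of_mem (Finset.mem_univ j), Finset.card_univ, Fintype.card_fin,
          Finset.card_image_of_injective _ (Fin.succAbove_right_injective), Finset.card_univ,
          Fintype.card_fin]
        omega
    have := hA.trans hB.symm
    calc Set.range v = ↑(Finset.univ.image v) := by
          rw [Finset.coe_image, Finset.coe_univ, Set.image_univ]
      _ = ↑(Finset.univ.image (Fin.succAbove j)) := by rw [this]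
      _ = Set.range (Fin.succAbove j) := by
          rw [Finset.coe_image, Finset.coe_univ, Set.image_univ]
  set σ : Fin n ≃ Fin n :=
    (Equiv.ofInjective v hv).trans ((Equiv.setCongr hre).trans
      (Equiv.ofInjective _ (Fin.succAbove_right_injective (p := j))).symm) with hσdef
  have hσ : ∀ i, j.succAbove (σ i) = v i := by
    intro i
    have : (Equiv.ofInjective _ (Fin.succAbove_right_injective (p := j))) (σ i)
        = (Equiv.setCongr hre) (Equiv.ofInjective v hv i) := by
      simp [hσdef]
    exact congrArg Subtype.val this
  have htup : (fun i => (Pi.basisFun ℂ (Fin (n + 1))) (v i)) = (bt n j) ∘ σ := by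
    funext i
    simp only [Function.comp_apply, bt, sb, hσ, Pi.basisFun_apply]
  rw [htup, AlternatingMap.map_perm, AlternatingMap.map_perm, h]

/-- The diagonal linear automorphism with diagonal entries `d`. -/
noncomputable def dg (n : ℕ) (d : Fin (n + 1) → ℂ) (hd : ∀ i, d i ≠ 0) :
    nV n ≃ₗ[ℂ] nV n :=
  LinearEquiv.piCongrRight fun i => LinearEquiv.smulOfNeZero ℂ ℂ (d i) (hd i)

lemma dg_sb (n : ℕ) (d : Fin (n + 1) → ℂ) (hd : ∀ i, d i ≠ 0) (i : Fin (n + 1)) :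
    dg n d hd (sb n i) = d i • sb n i := by
  funext k
  simp only [dg, LinearEquiv.piCongrRight, sb, Pi.smul_apply, smul_eq_mul]
  by_cases hk : k = i <;> simp [hk, Pi.single_apply]

lemma dg_symm_sb (n : ℕ) (d : Fin (n + 1) → ℂ) (hd : ∀ i, d i ≠ 0) (i : Fin (n + 1)) :
    (dg n d hd).symm (sb n i) = (d i)⁻¹ • sb n i := by
  rw [LinearEquiv.symm_apply_eq, map_smul, dg_sb, smul_smul, inv_mul_cancel₀ (hd i), one_smul]

lemma glAct_coe (n : ℕ) (g : nV n ≃ₗ[ℂ] nV n) (μ : AlternatingMap ℂ (nV n) (nV n) (Fin n)) :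
    glAct n g ⇑μ = ⇑(g.toLinearMap.compAlternatingMap (μ.compLinearMap g.symm.toLinearMap)) := by
  funext x
  simp [glAct, LinearMap.compAlternatingMap_apply, AlternatingMap.compLinearMap_apply]

lemma prod_aux (n : ℕ) (hn : 2 ≤ n) (t : ℂ) :
    ∏ i : Fin (n + 1), (if (i : ℕ) < 2 then t else 1) = t ^ 2 := by
  have h1 : ((1 : Fin (n + 1)) : ℕ) = 1 := by
    rw [Fin.val_one']; exact Nat.mod_eq_of_lt (by omega)
  have hf : Finset.univ.filter (fun i : Fin (n + 1) => (i : ℕ) < 2) = {0, 1} := by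
    ext i
    simp only [Finset.mem_filter, Finset.mem_univ, true_and, Finset.mem_insert,
      Finset.mem_singleton, Fin.ext_iff, Fin.val_zero, h1]
    omega
  rw [← Finset.prod_filter_mul_prod_filter_not Finset.univ (fun i : Fin (n + 1) => (i : ℕ) < 2)]
  have h2 : ∀ i ∈ Finset.univ.filter (fun i : Fin (n + 1) => ¬ (i : ℕ) < 2),
      (if (i : ℕ) < 2 then t else 1) = 1 := by
    intro i hi
    simp only [Finset.mem_filter] at hi
    rw [if_neg hi.2]
  rw [Finset.prod_congr rfl h2, Finset.prod_const_one, mul_one, hf,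
    Finset.prod_pair (by simp [Fin.ext_iff]; omega),
    if_pos (by simp), if_pos (by rw [h1]; omega)]
  ring

/-- For every integer `n ≥ 2`, the algebra `D₃` degenerates to `C₁`. -/
theorem D3_degenerates_to_C1 (n : ℕ) (hn : 2 ≤ n)
    (μ ν : AlternatingMap ℂ (nV n) (nV n) (Fin n)) (hμ : IsD n 3 μ) (hν : IsC1 n ν) :
    ⇑ν ∈ closure (glOrbit n ⇑μ) := by
  classical
  -- the curve of orbit elements
  have key : ∀ t : ℂ, t ≠ 0 → ⇑(ν + t ^ 2 • (μ - ν)) ∈ glOrbit n ⇑μ := by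
    intro t ht
    set d : Fin (n + 1) → ℂ := fun i => if (i : ℕ) < 2 then t⁻¹ else 1 with hd_def
    have hd : ∀ i, d i ≠ 0 := by
      intro i
      simp only [hd_def]
      split_ifs
      · exact inv_ne_zero ht
      · exact one_ne_zero
    have hdinv : ∀ i : Fin (n + 1), (d i)⁻¹ = if (i : ℕ) < 2 then t else 1 := by
      intro i
      simp only [hd_def]
      split_ifs <;> simp
    refine ⟨dg n d hd, ?_⟩
    rw [glAct_coe]
    refine congrArg _ (alt_ext_bt fun j => ?_).symm
    -- compute the left side at `bt n j`
    have hval : ((dg n d hd).toLinearMap.compAlternatingMap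
        (μ.compLinearMap (dg n d hd).symm.toLinearMap)) (bt n j)
        = (d j * t ^ 2 * d j) • μ (bt n j) := by
      rw [LinearMap.compAlternatingMap_apply, AlternatingMap.compLinearMap_apply]
      have htup : (fun k => (dg n d hd).symm.toLinearMap (bt n j k))
          = fun k => (d (j.succAbove k))⁻¹ • bt n j k := by
        funext k
        exact dg_symm_sb n d hd (j.succAbove k)
      rw [htup]
      have hsm : μ (fun k => (d (j.succAbove k))⁻¹ • bt n j k)
          = (∏ k : Fin n, (d (j.succAbove k))⁻¹) • μ (bt n j) :=
        μ.toMultilinearMap.map_smul_univ (fun k => (d (j.succAbove k))⁻¹) (bt n j)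
      rw [hsm, map_smul]
      have hp : ∏ k : Fin n, (d (j.succAbove k))⁻¹ = (d j) * t ^ 2 := by
        have h0 := Fin.prod_univ_succAbove (fun i : Fin (n + 1) => (d i)⁻¹) j
        have h1 : ∏ i : Fin (n + 1), (d i)⁻¹ = t ^ 2 := by
          simp only [hdinv]
          exact prod_aux n hn t
        rw [h1] at h0
        calc ∏ k : Fin n, (d (j.succAbove k))⁻¹
            = d j * ((d j)⁻¹ * ∏ k : Fin n, (d (j.succAbove k))⁻¹) := by
              rw [← mul_assoc, mul_inv_cancel₀ (hd j), one_mul]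
          _ = d j * t ^ 2 := by rw [← h0]
      rw [hp]
      simp only [LinearEquiv.coe_coe]
      have hg : (dg n d hd) (μ (bt n j)) = d j • μ (bt n j) := by
        rcases (hμ j) with ⟨hlt, hge⟩
        by_cases h3 : (j : ℕ) < 3
        · rw [hlt h3, dg_sb]
        · rw [hge (by omega), map_zero, smul_zero]
      rw [hg, smul_smul]
    rw [hval]
    -- compare with the right side
    have hsplit : (ν + t ^ 2 • (μ - ν)) (bt n j)
        = ν (bt n j) + t ^ 2 • (μ (bt n j) - ν (bt n j)) := by
      simp
    rw [hsplit]
    by_cases hj2 : (j : ℕ) < 2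
    · -- here `j = 0` or `j = 1`, and the coefficient is `1`
      have hdj : d j = t⁻¹ := by simp only [hd_def, if_pos hj2]
      have hμj : μ (bt n j) = sb n j := (hμ j).1 (by omega)
      have hνj : ν (bt n j) = sb n j := by
        have h1 : ((1 : Fin (n + 1)) : ℕ) = 1 := by
          rw [Fin.val_one']; exact Nat.mod_eq_of_lt (by omega)
        have hj01 : (j : ℕ) = 0 ∨ (j : ℕ) = 1 := by omega
        rcases hj01 with h | h
        · have : j = 0 := by rw [Fin.ext_iff, h, Fin.val_zero]
          rw [this]; exact hν.1
        · have : j = 1 := by rw [Fin.ext_iff, h, h1]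
          rw [this]; exact hν.2.1
      rw [hμj, hνj, hdj]
      rw [sub_self, smul_zero, add_zero]
      have hone : t⁻¹ * t ^ 2 * t⁻¹ = 1 := by field_simp
      rw [hone, one_smul]
    · -- here the coefficient is `t ^ 2` and `ν (bt n j) = 0`
      have hdj : d j = 1 := by simp only [hd_def, if_neg hj2]
      have hνj : ν (bt n j) = 0 := by
        refine hν.2.2 j ?_ ?_
        · intro h; rw [h, Fin.val_zero] at hj2; omega
        · intro h
          have h1 : ((1 : Fin (n + 1)) : ℕ) = 1 := by
            rw [Fin.val_one']; exact Nat.mod_eq_of_lt (by omega)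
          rw [h, h1] at hj2; omega
      rw [hνj, hdj, sub_zero, zero_add, one_mul, mul_one]
  -- pass to the limit `t → 0`
  have hfun : ∀ t : ℂ, ⇑(ν + t ^ 2 • (μ - ν))
      = fun x => ν x + t ^ 2 • (μ x - ν x) := by
    intro t; funext x; simp
  have hcont : Continuous fun t : ℂ => (fun x => ν x + t ^ 2 • (μ x - ν x) :
      (Fin n → nV n) → nV n) := by
    refine continuous_pi fun x => ?_
    exact continuous_const.add (((continuous_pow 2)).smul continuous_const)
  have hzero : (fun x => ν x + (0 : ℂ) ^ 2 • (μ x - ν x) : (Fin n → nV n) → nV n) = ⇑ν := by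
    funext x; simp
  have htend : Filter.Tendsto (fun t : ℂ => (fun x => ν x + t ^ 2 • (μ x - ν x) :
      (Fin n → nV n) → nV n)) (nhdsWithin 0 {0}ᶜ) (nhds ⇑ν) := by
    have := hcont.tendsto 0
    rw [hzero] at this
    exact this.mono_left nhdsWithin_le_nhds
  refine mem_closure_of_tendsto htend ?_
  filter_upwards [eventually_mem_nhdsWithin] with t ht
  rw [← hfun t]
  exact key t ht
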